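/- Fix T > 0 and Q ≥ 0. Let θ, η : [0,T] → ℝ be continuously differentiable with η(t) > 0 for all t. Let η̄ = min_{t∈[0,T]} η(t) and let θ̄ > 0 be a constant with θ̄ ≥ −θ'(t) for all t ∈ [0,T]; set γ = θ̄/(2η̄) and assume √γ·T < π. If ζ : [0,T] → ℝ is twice continuously differentiable and satisfies 2η(t)ζ''(t) + 2η'(t)ζ'(t) − θ'(t)ζ(t) = 0 for all t ∈ [0,T], ζ(0) = Q, and ζ(T) = 0, then ζ(t) ≥ 0 for all t ∈ [0,T]. -/

import Mathlib

open Set MeasureTheory Real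

set_option maxHeartbeats 1600000 in
/-- Under `√γ·T < π` with `γ = θ̄/(2η̄)` and `Q ≥ 0`, any twice
continuously differentiable solution of the Euler–Lagrange boundary value problem is
nonnegative on `[0,T]`. -/
theorem stmt14 (T Q : ℝ) (hT : 0 < T) (hQ : 0 ≤ Q)
    (θ η θ' η' : ℝ → ℝ)
    (hθ : ∀ t ∈ Set.Icc 0 T, HasDerivAt θ (θ' t) t)
    (hθ'c : ContinuousOn θ' (Set.Icc 0 T))
    (hη : ∀ t ∈ Set.Icc 0 T, HasDerivAt η (η' t) t)
    (hη'c : ContinuousOn η' (Set.Icc 0 T))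
    (hηpos : ∀ t ∈ Set.Icc 0 T, 0 < η t)
    (ηbar θbar : ℝ)
    (hηbar : IsLeast (η '' Set.Icc 0 T) ηbar)
    (hθbar : 0 < θbar)
    (hθbar' : ∀ t ∈ Set.Icc 0 T, -θ' t ≤ θbar)
    (hγ : Real.sqrt (θbar / (2 * ηbar)) * T < Real.pi)
    (ζ ζ' ζ'' : ℝ → ℝ)
    (hζ1 : ∀ t ∈ Set.Icc 0 T, HasDerivAt ζ (ζ' t) t)
    (hζ2 : ∀ t ∈ Set.Icc 0 T, HasDerivAt ζ' (ζ'' t) t)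
    (hζ''c : ContinuousOn ζ'' (Set.Icc 0 T))
    (hODE : ∀ t ∈ Set.Icc 0 T, 2 * η t * ζ'' t + 2 * η' t * ζ' t - θ' t * ζ t = 0)
    (hζ0 : ζ 0 = Q) (hζT : ζ T = 0) :
    ∀ t ∈ Set.Icc 0 T, 0 ≤ ζ t := by
  have hπ := Real.pi_pos
  have hζcont : ContinuousOn ζ (Set.Icc 0 T) :=
    fun t ht => (hζ1 t ht).continuousAt.continuousWithinAt
  obtain ⟨⟨t₁, ht₁, ht₁v⟩, hηlb⟩ := hηbar
  have hηbarpos : 0 < ηbar := ht₁v ▸ hηpos t₁ ht₁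
  have hηbar_le : ∀ t ∈ Set.Icc 0 T, ηbar ≤ η t := fun t ht => hηlb ⟨t, ht, rfl⟩
  obtain ⟨γ, hγdef⟩ : ∃ x : ℝ, x = θbar / (2 * ηbar) := ⟨_, rfl⟩
  rw [← hγdef] at hγ
  have hγpos : 0 < γ := by rw [hγdef]; exact div_pos hθbar (by linarith)
  have hsqγ : 0 ≤ Real.sqrt γ := Real.sqrt_nonneg _
  obtain ⟨σ, hσdef⟩ : ∃ x : ℝ, x = (Real.sqrt γ * T + Real.pi) / (2 * T) := ⟨_, rfl⟩
  have hσpos : 0 < σ := by rw [hσdef]; exact div_pos (by nlinarith) (by linarith)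
  have hσTeq : σ * T = (Real.sqrt γ * T + Real.pi) / 2 := by
    rw [hσdef]; field_simp
  have hσT : σ * T < Real.pi := by rw [hσTeq]; linarith
  have hγσ : Real.sqrt γ < σ := by
    rw [hσdef, lt_div_iff₀ (by linarith : (0:ℝ) < 2 * T)]
    nlinarith
  have hγκ : γ < σ ^ 2 := by
    have hs := Real.sq_sqrt hγpos.le
    nlinarith
  have hkey : θbar < 2 * ηbar * σ ^ 2 := by
    rw [hγdef, div_lt_iff₀ (by linarith : (0:ℝ) < 2 * ηbar)] at hγκ
    linarith
  by_contra hcon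
  push_neg at hcon
  obtain ⟨t₀, ht₀, hneg⟩ := hcon
  have hζ00 : 0 ≤ ζ 0 := hζ0 ▸ hQ
  have ht₀0 : 0 < t₀ := by
    rcases eq_or_lt_of_le ht₀.1 with h | h
    · exfalso; rw [← h] at hneg; linarith
    · exact h
  -- the last zero of ζ before t₀
  set Sa : Set ℝ := {t | t ∈ Set.Icc 0 t₀ ∧ ζ t = 0} with hSadef
  have hIccsub₀ : Set.Icc 0 t₀ ⊆ Set.Icc 0 T := Set.Icc_subset_Icc le_rfl ht₀.2
  have hSaclosed : IsClosed Sa := by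
    have heq : Sa = Set.Icc 0 t₀ ∩ ζ ⁻¹' {0} := by
      ext x; simp [hSadef]
    rw [heq]
    exact (hζcont.mono hIccsub₀).preimage_isClosed_of_isClosed isClosed_Icc
      isClosed_singleton
  have hSane : Sa.Nonempty := by
    have h0 : (0:ℝ) ∈ Set.Icc (ζ t₀) (ζ 0) := ⟨hneg.le, hζ00⟩
    obtain ⟨c, hc, hcz⟩ := intermediate_value_Icc' ht₀.1 (hζcont.mono hIccsub₀) h0
    exact ⟨c, hc, hcz⟩
  have hSabdd : BddAbove Sa := ⟨t₀, fun x hx => hx.1.2⟩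
  set a := sSup Sa with hadef
  have haSa : a ∈ Sa := hSaclosed.csSup_mem hSane hSabdd
  have hζa : ζ a = 0 := haSa.2
  have ha0 : 0 ≤ a := haSa.1.1
  have hat₀ : a < t₀ := by
    rcases eq_or_lt_of_le haSa.1.2 with h | h
    · exfalso; rw [h] at hζa; linarith
    · exact h
  have hAneg : ∀ t, a < t → t ≤ t₀ → ζ t < 0 := by
    intro t hta htt₀
    by_contra hge
    push_neg at hge
    have h0 : (0:ℝ) ∈ Set.Icc (ζ t₀) (ζ t) := ⟨hneg.le, hge⟩
    obtain ⟨c, hc, hcz⟩ := intermediate_value_Icc' htt₀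
      (hζcont.mono (Set.Icc_subset_Icc (by linarith) ht₀.2)) h0
    have hca : c ≤ a := le_csSup hSabdd ⟨⟨by linarith [hc.1], hc.2⟩, hcz⟩
    linarith [hc.1]
  -- the first zero of ζ after t₀
  have ht₀T : t₀ ≤ T := ht₀.2
  set Sb : Set ℝ := {t | t ∈ Set.Icc t₀ T ∧ ζ t = 0} with hSbdef
  have hIccsubT : Set.Icc t₀ T ⊆ Set.Icc 0 T := Set.Icc_subset_Icc ht₀.1 le_rfl
  have hSbclosed : IsClosed Sb := by
    have heq : Sb = Set.Icc t₀ T ∩ ζ ⁻¹' {0} := by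
      ext x; simp [hSbdef]
    rw [heq]
    exact (hζcont.mono hIccsubT).preimage_isClosed_of_isClosed isClosed_Icc
      isClosed_singleton
  have hSbne : Sb.Nonempty := ⟨T, ⟨ht₀T, le_rfl⟩, hζT⟩
  have hSbbdd : BddBelow Sb := ⟨t₀, fun x hx => hx.1.1⟩
  set b := sInf Sb with hbdef
  have hbSb : b ∈ Sb := hSbclosed.csInf_mem hSbne hSbbdd
  have hζb : ζ b = 0 := hbSb.2
  have hbT : b ≤ T := hbSb.1.2
  have ht₀b : t₀ < b := by
    rcases eq_or_lt_of_le hbSb.1.1 with h | h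
    · exfalso; rw [← h] at hζb; linarith
    · exact h
  have hBneg : ∀ t, t₀ ≤ t → t < b → ζ t < 0 := by
    intro t ht₀t htb
    by_contra hge
    push_neg at hge
    have h0 : (0:ℝ) ∈ Set.Icc (ζ t₀) (ζ t) := ⟨hneg.le, hge⟩
    obtain ⟨c, hc, hcz⟩ := intermediate_value_Icc ht₀t
      (hζcont.mono (Set.Icc_subset_Icc ht₀.1 (by linarith))) h0
    have hbc : b ≤ c := csInf_le hSbbdd ⟨⟨hc.1, by linarith [hc.2]⟩, hcz⟩
    linarith [hc.2]
  have hab : a < b := hat₀.trans ht₀b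
  have hsub : Set.Icc a b ⊆ Set.Icc 0 T := Set.Icc_subset_Icc ha0 hbT
  have hζnegab : ∀ t ∈ Set.Ioo a b, ζ t < 0 := by
    intro t ht
    rcases le_total t t₀ with h | h
    · exact hAneg t ht.1 h
    · exact hBneg t h ht.2
  -- comparison sine
  obtain ⟨ε, hεdef⟩ : ∃ x : ℝ, x = (Real.pi / σ - T) / 2 := ⟨_, rfl⟩
  have hεpos : 0 < ε := by
    have hTσ : T < Real.pi / σ := (lt_div_iff₀ hσpos).2 (by linarith [hσT])
    rw [hεdef]; linarith
  have hσε : σ * ε = (Real.pi - σ * T) / 2 := by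
    rw [hεdef]; field_simp
  have hsin : ∀ t ∈ Set.Icc a b, 0 < Real.sin (σ * (t - a + ε)) := by
    intro t ht
    apply Real.sin_pos_of_pos_of_lt_pi
    · nlinarith [ht.1]
    · have hba : t - a ≤ T := by
        have := hsub ht
        linarith [ht.2, this.2]
      nlinarith [mul_le_mul_of_nonneg_left hba hσpos.le]
  obtain ⟨R, hRdef⟩ : ∃ f : ℝ → ℝ, f = fun t => σ * Real.cos (σ * (t - a + ε)) / Real.sin (σ * (t - a + ε)) := ⟨_, rfl⟩
  obtain ⟨E, hEdef⟩ : ∃ f : ℝ → ℝ, f = fun t => 2 * η t * ζ' t * ζ t - 2 * ηbar * R t * (ζ t) ^ 2 := ⟨_, rfl⟩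
  have hφd : ∀ t : ℝ, HasDerivAt (fun s => σ * (s - a + ε)) σ t := by
    intro t
    simpa using (((hasDerivAt_id t).sub_const a).add_const ε).const_mul σ
  have hRd : ∀ t ∈ Set.Icc a b, HasDerivAt R (-(σ ^ 2 + (R t) ^ 2)) t := by
    intro t ht
    have hs := hsin t ht
    have h1 : HasDerivAt (fun s => Real.sin (σ * (s - a + ε)))
        (Real.cos (σ * (t - a + ε)) * σ) t :=
      (Real.hasDerivAt_sin _).comp t (hφd t)
    have h2 : HasDerivAt (fun s => σ * Real.cos (σ * (s - a + ε)))
        (σ * (-Real.sin (σ * (t - a + ε)) * σ)) t :=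
      ((Real.hasDerivAt_cos _).comp t (hφd t)).const_mul σ
    have h3 := h2.fun_div h1 hs.ne'
    rw [hRdef]
    convert h3 using 1
    · rfl
    · rfl
    beta_reduce
    field_simp
    ring
  have hEd : ∀ t ∈ Set.Icc a b, HasDerivAt E
      ((2 * η' t * ζ' t + 2 * η t * ζ'' t) * ζ t + 2 * η t * ζ' t * ζ' t
        - (2 * ηbar * -(σ ^ 2 + (R t) ^ 2) * (ζ t) ^ 2
          + 2 * ηbar * R t * (2 * ζ t * ζ' t))) t := by
    intro t ht
    have ht' := hsub ht
    have hA : HasDerivAt (fun s => 2 * η s) (2 * η' t) t := (hη t ht').const_mul 2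
    have h1 := (hA.mul (hζ2 t ht')).mul (hζ1 t ht')
    have h3 := (hRd t ht).const_mul (2 * ηbar)
    have h4 : HasDerivAt (fun s => (ζ s) ^ 2) (2 * ζ t * ζ' t) t := by
      simpa using (hζ1 t ht').fun_pow 2
    have h5 := h3.mul h4
    rw [hEdef]
    exact h1.sub h5
  have hDpos : ∀ t ∈ Set.Ioo a b,
      0 < (2 * η' t * ζ' t + 2 * η t * ζ'' t) * ζ t + 2 * η t * ζ' t * ζ' t
        - (2 * ηbar * -(σ ^ 2 + (R t) ^ 2) * (ζ t) ^ 2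
          + 2 * ηbar * R t * (2 * ζ t * ζ' t)) := by
    intro t ht
    have ht' : t ∈ Set.Icc a b := Set.Ioo_subset_Icc_self ht
    have htT := hsub ht'
    have hode := hODE t htT
    have hζt := hζnegab t ht
    have hη1 := hηbar_le t htT
    have hθ1 := hθbar' t htT
    have heq : 2 * η t * ζ'' t + 2 * η' t * ζ' t = θ' t * ζ t := by linarith
    have hodex : (2 * η t * ζ'' t + 2 * η' t * ζ' t) * ζ t = θ' t * ζ t * ζ t := by
      rw [heq]
    have hDeq : (2 * η' t * ζ' t + 2 * η t * ζ'' t) * ζ t + 2 * η t * ζ' t * ζ' t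
        - (2 * ηbar * -(σ ^ 2 + (R t) ^ 2) * (ζ t) ^ 2
          + 2 * ηbar * R t * (2 * ζ t * ζ' t))
        = θ' t * (ζ t) ^ 2 + 2 * (η t - ηbar) * (ζ' t) ^ 2
          + 2 * ηbar * (ζ' t - R t * ζ t) ^ 2 + 2 * ηbar * σ ^ 2 * (ζ t) ^ 2 := by
      linear_combination hodex
    rw [hDeq]
    have hx2 : 0 < (ζ t) ^ 2 := by nlinarith [mul_pos_of_neg_of_neg hζt hζt]
    nlinarith [mul_pos (show (0:ℝ) < θ' t + 2 * ηbar * σ ^ 2 by linarith) hx2,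
      mul_nonneg (sub_nonneg.2 hη1) (sq_nonneg (ζ' t)),
      mul_nonneg hηbarpos.le (sq_nonneg (ζ' t - R t * ζ t))]
  have hEcont : ContinuousOn E (Set.Icc a b) :=
    fun t ht => (hEd t ht).continuousAt.continuousWithinAt
  have hmono : StrictMonoOn E (Set.Icc a b) := by
    apply strictMonoOn_of_deriv_pos (convex_Icc a b) hEcont
    intro t ht
    rw [interior_Icc] at ht
    rw [(hEd t (Set.Ioo_subset_Icc_self ht)).deriv]
    exact hDpos t ht
  have hEa : E a = 0 := by simp [hEdef, hζa]
  have hEb : E b = 0 := by simp [hEdef, hζb]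
  have hlt := hmono (Set.left_mem_Icc.2 hab.le) (Set.right_mem_Icc.2 hab.le) hab
  rw [hEa, hEb] at hlt
  exact lt_irrefl 0 hlt
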